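/- The optimal value function is Lipschitz in the task: for any tasks w, w' ∈ ℝ^d, ‖Q*_w − Q*_{w'}‖_∞ ≤ (‖φ‖_∞/(1−γ)) ‖w − w'‖. -/

import Mathlib

open scoped RealInnerProductSpace

noncomputable section

variable {S A E : Type*}

/-- Expected value at step `n` of the (vector-valued) one-step function `f` along
trajectories that start with the state-action pair `(s, a)` and afterwards follow the
deterministic policy `π` in an MDP with transition kernel `p`. -/
def stepVal [Fintype S] [AddCommMonoid E] [Module ℝ E]
    (p : S → A → S → ℝ) (π : S → A) (f : S → A → S → E) : ℕ → S → A → E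
  | 0, s, a => ∑ s' : S, p s a s' • f s a s'
  | n + 1, s, a => ∑ s' : S, p s a s' • stepVal p π f n s' (π s')

/-- Expected discounted sum of the one-step quantities `f` when following policy `π`
after starting with the pair `(s, a)`. -/
def polVal [Fintype S] [NormedAddCommGroup E] [NormedSpace ℝ E]
    (p : S → A → S → ℝ) (γ : ℝ) (π : S → A) (f : S → A → S → E) (s : S) (a : A) : E :=
  ∑' n : ℕ, γ ^ n • stepVal p π f n s a

/-- Action-value function `Q^π` of policy `π` for the one-step reward `r`. -/
def Qpol [Fintype S] (p : S → A → S → ℝ) (γ : ℝ) (π : S → A)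
    (r : S → A → S → ℝ) (s : S) (a : A) : ℝ :=
  polVal p γ π r s a

/-- Successor features of policy `π`: the expected discounted sum of feature vectors. -/
def SF [Fintype S] {d : ℕ} (p : S → A → S → ℝ) (γ : ℝ) (π : S → A)
    (φ : S → A → S → EuclideanSpace ℝ (Fin d)) (s : S) (a : A) :
    EuclideanSpace ℝ (Fin d) :=
  polVal p γ π φ s a

/-- `p` is a probability transition kernel. -/
def IsKernel [Fintype S] (p : S → A → S → ℝ) : Prop :=
  (∀ s a s', 0 ≤ p s a s') ∧ ∀ s a, ∑ s' : S, p s a s' = 1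

/-- Optimal action-value function, over deterministic stationary policies. -/
def Qstar [Fintype S] (p : S → A → S → ℝ) (γ : ℝ) (r : S → A → S → ℝ)
    (s : S) (a : A) : ℝ :=
  ⨆ π : S → A, Qpol p γ π r s a

/-- Reward linear in the features `φ` with task (weight) vector `w`. -/
def rTask {d : ℕ} (φ : S → A → S → EuclideanSpace ℝ (Fin d))
    (w : EuclideanSpace ℝ (Fin d)) : S → A → S → ℝ :=
  fun s a s' => ⟪φ s a s', w⟫

end

section auxlem
variable {S A : Type*} [Fintype S]

lemma stepVal_abs_le (p : S → A → S → ℝ) (hp : IsKernel p) (π : S → A)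
    (r : S → A → S → ℝ) (C : ℝ) (hr : ∀ s a s', |r s a s'| ≤ C) :
    ∀ n s a, |stepVal p π r n s a| ≤ C := by
  intro n
  induction n with
  | zero =>
    intro s a
    show |∑ s' : S, p s a s' • r s a s'| ≤ C
    calc |∑ s' : S, p s a s' • r s a s'| ≤ ∑ s' : S, |p s a s' • r s a s'| :=
          Finset.abs_sum_le_sum_abs _ _
      _ ≤ ∑ s' : S, p s a s' * C := by
          apply Finset.sum_le_sum
          intro s' _
          rw [smul_eq_mul, abs_mul, abs_of_nonneg (hp.1 s a s')]
          exact mul_le_mul_of_nonneg_left (hr s a s') (hp.1 s a s')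
      _ = C := by rw [← Finset.sum_mul, hp.2 s a, one_mul]
  | succ n ih =>
    intro s a
    show |∑ s' : S, p s a s' • stepVal p π r n s' (π s')| ≤ C
    calc |∑ s' : S, p s a s' • stepVal p π r n s' (π s')|
        ≤ ∑ s' : S, |p s a s' • stepVal p π r n s' (π s')| := Finset.abs_sum_le_sum_abs _ _
      _ ≤ ∑ s' : S, p s a s' * C := by
          apply Finset.sum_le_sum
          intro s' _
          rw [smul_eq_mul, abs_mul, abs_of_nonneg (hp.1 s a s')]
          exact mul_le_mul_of_nonneg_left (ih s' (π s')) (hp.1 s a s')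
      _ = C := by rw [← Finset.sum_mul, hp.2 s a, one_mul]

lemma stepVal_sub (p : S → A → S → ℝ) (π : S → A) (f g : S → A → S → ℝ) :
    ∀ n s a, stepVal p π (fun s a s' => f s a s' - g s a s') n s a =
      stepVal p π f n s a - stepVal p π g n s a := by
  intro n
  induction n with
  | zero => intro s a; simp [stepVal, smul_sub, mul_sub, Finset.sum_sub_distrib]
  | succ n ih => intro s a; simp [stepVal, ih, smul_sub, mul_sub, Finset.sum_sub_distrib]

lemma summable_step (p : S → A → S → ℝ) (hp : IsKernel p) {γ : ℝ} (hγ0 : 0 ≤ γ) (hγ1 : γ < 1)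
    (π : S → A) (r : S → A → S → ℝ) (C : ℝ) (hr : ∀ s a s', |r s a s'| ≤ C) (s : S) (a : A) :
    Summable (fun n : ℕ => γ ^ n • stepVal p π r n s a) := by
  have hg : Summable (fun n : ℕ => C * γ ^ n) :=
    (summable_geometric_of_lt_one hγ0 hγ1).mul_left C
  apply Summable.of_abs
  apply Summable.of_nonneg_of_le (fun n => abs_nonneg _) _ hg
  intro n
  rw [smul_eq_mul, abs_mul, abs_pow, abs_of_nonneg hγ0, mul_comm]
  exact mul_le_mul_of_nonneg_right (stepVal_abs_le p hp π r C hr n s a) (pow_nonneg hγ0 n)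

lemma Qpol_abs_le (p : S → A → S → ℝ) (hp : IsKernel p) {γ : ℝ} (hγ0 : 0 ≤ γ) (hγ1 : γ < 1)
    (π : S → A) (r : S → A → S → ℝ) (C : ℝ) (hr : ∀ s a s', |r s a s'| ≤ C) (s : S) (a : A) :
    |Qpol p γ π r s a| ≤ C / (1 - γ) := by
  have hg : Summable (fun n : ℕ => C * γ ^ n) :=
    (summable_geometric_of_lt_one hγ0 hγ1).mul_left C
  have key : ∀ n : ℕ, |γ ^ n • stepVal p π r n s a| ≤ C * γ ^ n := by
    intro n
    rw [smul_eq_mul, abs_mul, abs_pow, abs_of_nonneg hγ0, mul_comm]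
    exact mul_le_mul_of_nonneg_right (stepVal_abs_le p hp π r C hr n s a) (pow_nonneg hγ0 n)
  calc |Qpol p γ π r s a| ≤ ∑' n : ℕ, |γ ^ n • stepVal p π r n s a| := by
        simpa only [Real.norm_eq_abs, Qpol, polVal] using
          norm_tsum_le_tsum_norm (f := fun n : ℕ => γ ^ n • stepVal p π r n s a)
          (by simpa only [Real.norm_eq_abs, smul_eq_mul] using
            ((summable_step p hp hγ0 hγ1 π r C hr s a).abs))
    _ ≤ ∑' n : ℕ, C * γ ^ n := by
        apply Summable.tsum_le_tsum key ((summable_step p hp hγ0 hγ1 π r C hr s a).abs) hg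
    _ = C / (1 - γ) := by
        rw [tsum_mul_left, tsum_geometric_of_lt_one hγ0 hγ1]
        ring

lemma abs_ciSup_sub_ciSup {ι : Type*} [Nonempty ι] [Finite ι] (f g : ι → ℝ) (C : ℝ)
    (h : ∀ i, |f i - g i| ≤ C) : |(⨆ i, f i) - ⨆ i, g i| ≤ C := by
  rw [abs_sub_le_iff]
  constructor
  · rw [sub_le_iff_le_add]
    apply ciSup_le
    intro i
    have h1 := (abs_le.1 (h i)).2
    have h2 : g i ≤ ⨆ i, g i := le_ciSup (Set.Finite.bddAbove (Set.finite_range g)) i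
    linarith
  · rw [sub_le_iff_le_add]
    apply ciSup_le
    intro i
    have h1 := (abs_le.1 (h i)).1
    have h2 : f i ≤ ⨆ i, f i := le_ciSup (Set.Finite.bddAbove (Set.finite_range f)) i
    linarith

end auxlem

/-- the optimal value function is Lipschitz in the task:
`‖Q*_w − Q*_{w'}‖_∞ ≤ (‖φ‖_∞/(1−γ)) ‖w − w'‖`. -/


theorem statement9 {S A : Type*} [Fintype S] [Fintype A] [Nonempty S] [Nonempty A]
    {d : ℕ} (p : S → A → S → ℝ) (hp : IsKernel p)
    (γ : ℝ) (hγ0 : 0 ≤ γ) (hγ1 : γ < 1)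
    (φ : S → A → S → EuclideanSpace ℝ (Fin d))
    (w w' : EuclideanSpace ℝ (Fin d)) :
    (⨆ s, ⨆ a, |Qstar p γ (rTask φ w) s a - Qstar p γ (rTask φ w') s a|) ≤
      (⨆ s, ⨆ a, ⨆ s', ‖φ s a s'‖) / (1 - γ) * ‖w - w'‖ := by
  set Φ := ⨆ s, ⨆ a, ⨆ s', ‖φ s a s'‖ with hΦ
  have hφbd : ∀ (v : EuclideanSpace ℝ (Fin d)) s a s', |rTask φ v s a s'| ≤ Φ * ‖v‖ := by
    intro v s a s'
    have b3 : ‖φ s a s'‖ ≤ ⨆ s', ‖φ s a s'‖ :=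
      le_ciSup (f := fun s' => ‖φ s a s'‖) (Set.Finite.bddAbove (Set.finite_range _)) s'
    have b2 : (⨆ s', ‖φ s a s'‖) ≤ ⨆ a, ⨆ s', ‖φ s a s'‖ :=
      le_ciSup (f := fun a => ⨆ s', ‖φ s a s'‖) (Set.Finite.bddAbove (Set.finite_range _)) a
    have b1 : (⨆ a, ⨆ s', ‖φ s a s'‖) ≤ Φ :=
      le_ciSup (f := fun s => ⨆ a, ⨆ s', ‖φ s a s'‖) (Set.Finite.bddAbove (Set.finite_range _)) s
    calc |rTask φ v s a s'| ≤ ‖φ s a s'‖ * ‖v‖ := abs_real_inner_le_norm _ _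
      _ ≤ Φ * ‖v‖ := mul_le_mul_of_nonneg_right (by linarith) (norm_nonneg _)
  have key : ∀ s a, |Qstar p γ (rTask φ w) s a - Qstar p γ (rTask φ w') s a|
      ≤ Φ * ‖w - w'‖ / (1 - γ) := by
    intro s a
    apply abs_ciSup_sub_ciSup
    intro π
    have hsub : (fun s a s' => rTask φ w s a s' - rTask φ w' s a s') = rTask φ (w - w') := by
      funext s a s'; simp [rTask, inner_sub_right]
    have hdiff : Qpol p γ π (rTask φ w) s a - Qpol p γ π (rTask φ w') s a
        = Qpol p γ π (rTask φ (w - w')) s a := by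
      unfold Qpol polVal
      rw [← Summable.tsum_sub (summable_step p hp hγ0 hγ1 π _ _ (hφbd w) s a)
        (summable_step p hp hγ0 hγ1 π _ _ (hφbd w') s a)]
      congr 1; funext n
      rw [← smul_sub, ← stepVal_sub p π (rTask φ w) (rTask φ w'), hsub]
    rw [hdiff]
    exact Qpol_abs_le p hp hγ0 hγ1 π _ _ (hφbd (w - w')) s a
  have h1γ : (0:ℝ) < 1 - γ := by linarith
  calc (⨆ s, ⨆ a, |Qstar p γ (rTask φ w) s a - Qstar p γ (rTask φ w') s a|)
      ≤ Φ * ‖w - w'‖ / (1 - γ) := ciSup_le fun s => ciSup_le fun a => key s a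
    _ = Φ / (1 - γ) * ‖w - w'‖ := by ring
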